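/- Let r > 0, d > 0, θ ∈ (−1, 1), and δ a real number with |δ·d| < r. Then the exact distance r' = √(r² − 2 r δ d θ + δ² d²) satisfies |r' − (r − δ d θ + δ² d² (1 − θ²)/(2r))| ≤ C · (δ d / r)³ · r for some absolute constant C, i.e., the Fresnel (second-order Taylor) approximation error is of third order in δd/r. -/

import Mathlib

set_option maxHeartbeats 1000000 in
lemma fresnel_aux (u θ : ℝ) (hu : |u| < 1) (hθ : |θ| < 1) :
    |Real.sqrt (1 - 2*u*θ + u^2) - (1 - u*θ + u^2*(1-θ^2)/2)| ≤ 2 * |u|^3 := by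
  have hu0 : 0 ≤ |u| := abs_nonneg u
  have hθ0 : 0 ≤ |θ| := abs_nonneg θ
  have hu2 : u^2 < 1 := by nlinarith [sq_abs u]
  have hθ2 : θ^2 < 1 := by nlinarith [sq_abs θ]
  set x := 1 - 2*u*θ + u^2 with hxdef
  set a := 1 - u*θ + u^2*(1-θ^2)/2 with hadef
  clear_value x a
  have huθ : u*θ < 1 := by nlinarith [sq_nonneg (u-θ)]
  have hnn : 0 ≤ u^2 * (1 - θ^2) :=
    mul_nonneg (sq_nonneg u) (le_of_lt (sub_pos.mpr hθ2))
  have hx0 : 0 ≤ x := by nlinarith [sq_nonneg (1-u*θ)]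
  have ha : 1 - u*θ ≤ a := by nlinarith
  have hs := Real.sq_sqrt hx0
  have hs0 := Real.sqrt_nonneg x
  have hsge : 1 - u*θ ≤ Real.sqrt x := by
    have h1 : (1-u*θ)^2 ≤ x := by nlinarith
    calc 1 - u*θ ≤ |1 - u*θ| := le_abs_self _
      _ = Real.sqrt ((1-u*θ)^2) := (Real.sqrt_sq_eq_abs _).symm
      _ ≤ Real.sqrt x := Real.sqrt_le_sqrt h1
  have hden : 1 - θ^2 ≤ Real.sqrt x + a := by nlinarith [sq_nonneg (u-θ)]
  have hdenpos : 0 < Real.sqrt x + a := by nlinarith [sq_nonneg (u-θ)]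
  -- numerator bound
  have hid : x - a^2 = u^3*θ*(1-θ^2) - u^4*(1-θ^2)^2/4 := by
    rw [hxdef, hadef]; ring
  have hcube : |u^3 * θ| ≤ |u|^3 := by
    rw [abs_mul, abs_pow]
    exact mul_le_of_le_one_right (pow_nonneg hu0 3) hθ.le
  have hcube' := abs_le.mp hcube
  have h4 : u^4 = |u|^4 := by
    rw [← abs_pow]; exact (abs_of_nonneg (by positivity)).symm
  have h43 : u^4 ≤ |u|^3 := by
    rw [h4]; exact pow_le_pow_of_le_one hu0 hu.le (by norm_num)
  have h40 : 0 ≤ u^4 := by positivity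
  have hsq1 : (1-θ^2)^2 ≤ 1-θ^2 := by nlinarith [sq_nonneg θ]
  have hsq0 : 0 ≤ (1-θ^2)^2 := sq_nonneg _
  have h1θ : (0:ℝ) ≤ 1 - θ^2 := le_of_lt (sub_pos.mpr hθ2)
  have b1 := mul_le_mul_of_nonneg_right hcube'.2 h1θ
  have b1' := mul_le_mul_of_nonneg_right hcube'.1 h1θ
  have b2 := mul_le_mul_of_nonneg_right h43 hsq0
  have b3 : |u|^3*(1-θ^2)^2 ≤ |u|^3*(1-θ^2) :=
    mul_le_mul_of_nonneg_left hsq1 (pow_nonneg hu0 3)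
  have b4 : 0 ≤ u^4*(1-θ^2)^2 := mul_nonneg h40 hsq0
  have hnum : |x - a^2| ≤ (5/4) * |u|^3 * (1 - θ^2) := by
    rw [hid, abs_le]
    constructor
    · linarith
    · linarith
  have key : |Real.sqrt x - a| * (Real.sqrt x + a) ≤ (5/4) * |u|^3 * (Real.sqrt x + a) := by
    have e1 : |Real.sqrt x - a| * (Real.sqrt x + a) = |x - a^2| := by
      have e0 : (Real.sqrt x - a) * (Real.sqrt x + a) = x - a^2 := by
        linear_combination hs
      rw [← abs_of_pos hdenpos, ← abs_mul, e0]
    rw [e1]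
    calc |x - a^2| ≤ (5/4) * |u|^3 * (1 - θ^2) := hnum
      _ ≤ (5/4) * |u|^3 * (Real.sqrt x + a) :=
          mul_le_mul_of_nonneg_left hden (by positivity)
  have h54 : |Real.sqrt x - a| ≤ (5/4) * |u|^3 := le_of_mul_le_mul_right key hdenpos
  linarith [pow_nonneg hu0 3]

theorem stmt_3 :
    ∃ C : ℝ, 0 < C ∧ ∀ (r d θ δ : ℝ), 0 < r → 0 < d → -1 < θ → θ < 1 → |δ * d| < r →
      |Real.sqrt (r ^ 2 - 2 * r * δ * d * θ + δ ^ 2 * d ^ 2) -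
          (r - δ * d * θ + δ ^ 2 * d ^ 2 * (1 - θ ^ 2) / (2 * r))|
        ≤ C * (|δ * d| / r) ^ 3 * r := by
  refine ⟨2, by norm_num, fun r d θ δ hr hd hθ1 hθ2 hδ => ?_⟩
  have hr0 : r ≠ 0 := hr.ne'
  set u := δ * d / r with hudef
  clear_value u
  have hru : δ * d = r * u := by rw [hudef]; field_simp
  have hu : |u| < 1 := by
    rw [hudef, abs_div, abs_of_pos hr, div_lt_one hr]
    exact hδ
  have hθ : |θ| < 1 := abs_lt.mpr ⟨hθ1, hθ2⟩
  have hrw : r ^ 2 - 2 * r * δ * d * θ + δ ^ 2 * d ^ 2 = r^2 * (1 - 2*u*θ + u^2) := by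
    rw [hudef]; field_simp
  have hsqrt : Real.sqrt (r ^ 2 - 2 * r * δ * d * θ + δ ^ 2 * d ^ 2)
      = r * Real.sqrt (1 - 2*u*θ + u^2) := by
    rw [hrw, Real.sqrt_mul (sq_nonneg r), Real.sqrt_sq hr.le]
  have happ : r - δ * d * θ + δ ^ 2 * d ^ 2 * (1 - θ ^ 2) / (2 * r)
      = r * (1 - u*θ + u^2*(1-θ^2)/2) := by
    rw [hudef]; field_simp
  rw [hsqrt, happ, ← mul_sub, abs_mul, abs_of_pos hr]
  have hkey := fresnel_aux u θ hu hθ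
  have huabs : |δ * d| / r = |u| := by
    rw [hudef, abs_div, abs_of_pos hr]
  rw [huabs]
  calc r * |Real.sqrt (1 - 2*u*θ + u^2) - (1 - u*θ + u^2*(1-θ^2)/2)|
      ≤ r * (2 * |u|^3) := mul_le_mul_of_nonneg_left hkey hr.le
    _ = 2 * |u|^3 * r := by ring
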